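/- For every rational number u, setting a = u² + 2, p = u·(u² + 2), q = 1, r = u² + 1, s = u, one has (p + q)⁴ + a·(r − s)⁴ = (p − q)⁴ + a·(r + s)⁴. -/
import Mathlib


theorem stmt_12 (u : ℚ) (a p q r s : ℚ)
    (ha : a = u ^ 2 + 2) (hp : p = u * (u ^ 2 + 2)) (hq : q = 1)
    (hr : r = u ^ 2 + 1) (hs : s = u) :
    (p + q) ^ 4 + a * (r - s) ^ 4 = (p - q) ^ 4 + a * (r + s) ^ 4 := by
  subst ha hp hq hr hs; ring
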